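/- In the deterministic setting with Γ_j = μ_α + β γ_j + δ_j, w_j > 0, and the weighted InSIDE orthogonality (Σ w_j)(Σ w_j δ_j γ_j) − (Σ w_j δ_j)(Σ w_j γ_j) = 0, the Egger population slope equals β exactly: [(Σ w_j)(Σ w_j γ_j Γ_j) − (Σ w_j γ_j)(Σ w_j Γ_j)] / [(Σ w_j)(Σ w_j γ_j²) − (Σ w_j γ_j)²] = β, provided the denominator θ₂ is nonzero. -/
import Mathlib

open Finset

theorem stmt16 (p : ℕ) (w γ δ : Fin p → ℝ) (β μα : ℝ) (hw : ∀ j, 0 < w j)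
    (Γ : Fin p → ℝ) (hΓ : ∀ j, Γ j = μα + β * γ j + δ j)
    (hortho : (∑ j, w j) * (∑ j, w j * δ j * γ j)
        - (∑ j, w j * δ j) * (∑ j, w j * γ j) = 0)
    (hθ₂ : (∑ j, w j) * (∑ j, w j * γ j ^ 2) - (∑ j, w j * γ j) ^ 2 ≠ 0) :
    ((∑ j, w j) * (∑ j, w j * γ j * Γ j) - (∑ j, w j * γ j) * (∑ j, w j * Γ j)) /
      ((∑ j, w j) * (∑ j, w j * γ j ^ 2) - (∑ j, w j * γ j) ^ 2) = β := by
  have h1 : ∑ j, w j * γ j * Γ j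
      = μα * (∑ j, w j * γ j) + β * (∑ j, w j * γ j ^ 2) + (∑ j, w j * δ j * γ j) := by
    simp only [hΓ]
    rw [Finset.mul_sum, Finset.mul_sum, ← Finset.sum_add_distrib, ← Finset.sum_add_distrib]
    exact Finset.sum_congr rfl fun j _ => by ring
  have h2 : ∑ j, w j * Γ j
      = μα * (∑ j, w j) + β * (∑ j, w j * γ j) + (∑ j, w j * δ j) := by
    simp only [hΓ]
    rw [Finset.mul_sum, Finset.mul_sum, ← Finset.sum_add_distrib, ← Finset.sum_add_distrib]
    exact Finset.sum_congr rfl fun j _ => by ring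
  rw [h1, h2]
  field_simp
  linear_combination hortho
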